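/- For integers p ≥ 2 and nonnegative integers D and d: if D − d is not divisible by p − 1 then q_p(D,d) = 0, and if D − d is divisible by p − 1 then q_p(D,d) = r_p((D−d)/(p−1), d). Here the bijection is given by sending a sequence (n_0, n_1, ...) with Σ n_i p^i = D and Σ n_i = d to the sequence (m_0, m_1, ...) with m_j = Σ_{i ≥ j+1} n_i. -/
import Mathlib

open Finset

namespace Stmt1



/-- `F n j = ∑_{i > j} n i` as an integer-valued finsupp. -/
noncomputable def F (n : ℕ →₀ ℕ) : ℕ →₀ ℤ :=
  Finsupp.onFinset (range (n.support.sup id))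
    (fun j => ∑ i ∈ n.support.filter (fun i => j < i), (n i : ℤ))
    (by
      intro j hj
      obtain ⟨i, hi⟩ := Finset.nonempty_of_sum_ne_zero hj
      rw [Finset.mem_filter] at hi
      have h1 : i ≤ n.support.sup id := Finset.le_sup (f := id) hi.1
      exact mem_range.mpr (lt_of_lt_of_le hi.2 h1))

lemma F_apply (n : ℕ →₀ ℕ) (j : ℕ) :
    F n j = ∑ i ∈ n.support.filter (fun i => j < i), (n i : ℤ) := rfl

lemma F_nonneg (n : ℕ →₀ ℕ) (j : ℕ) : 0 ≤ F n j := by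
  rw [F_apply]
  exact Finset.sum_nonneg fun i _ => Int.natCast_nonneg _

lemma F_eq_sum_range {n : ℕ →₀ ℕ} {N : ℕ} (hN : n.support ⊆ range N) (j : ℕ) :
    F n j = ∑ i ∈ range N, if j < i then (n i : ℤ) else 0 := by
  rw [F_apply, Finset.sum_filter]
  exact Finset.sum_subset hN (fun i _ hi => by
    simp [Finsupp.notMem_support_iff.mp hi])

lemma sup_subset (n : ℕ →₀ ℕ) : n.support ⊆ range (n.support.sup id + 1) :=
  fun i hi => mem_range.mpr (by have := Finset.le_sup (f := id) hi; simp at this; omega)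

lemma key1 (n : ℕ →₀ ℕ) (j : ℕ) : F n j = F n (j + 1) + (n (j + 1) : ℤ) := by
  set N := (n.support.sup id + 1) ⊔ (j + 2) with hNdef
  have hsub : n.support ⊆ range N := fun i hi => by
    have := Finset.le_sup (f := id) hi
    simp only [id] at this
    exact mem_range.mpr (by omega)
  rw [F_eq_sum_range hsub j, F_eq_sum_range hsub (j + 1)]
  have h1 : ∀ i ∈ range N, (if j < i then (n i : ℤ) else 0)
      = (if j + 1 < i then (n i : ℤ) else 0) + (if i = j + 1 then (n i : ℤ) else 0) := by
    intro i _
    split_ifs with h1 h2 h3 h2 h3 <;> first | ring1 | (exfalso; omega)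
  rw [Finset.sum_congr rfl h1, Finset.sum_add_distrib, Finset.sum_ite_eq' (range N)]
  rw [if_pos (mem_range.mpr (by omega))]

lemma key0 (n : ℕ →₀ ℕ) : F n 0 + (n 0 : ℤ) = ∑ i ∈ n.support, (n i : ℤ) := by
  set N := n.support.sup id + 1 with hNdef
  have hsub : n.support ⊆ range N := sup_subset n
  have h2 : ∑ i ∈ n.support, (n i : ℤ) = ∑ i ∈ range N, (n i : ℤ) :=
    Finset.sum_subset hsub (fun i _ hi => by simp [Finsupp.notMem_support_iff.mp hi])
  rw [F_eq_sum_range hsub 0, h2]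
  have h3 : ((n 0 : ℤ)) = ∑ i ∈ range N, (if i = 0 then (n i : ℤ) else 0) := by
    rw [Finset.sum_ite_eq' (range N), if_pos (mem_range.mpr (by omega))]
  rw [h3, ← Finset.sum_add_distrib]
  refine Finset.sum_congr rfl fun i _ => ?_
  split_ifs with h1 h2 h2 <;> first | ring1 | (exfalso; omega)

lemma F_supp_subset (n : ℕ →₀ ℕ) : (F n).support ⊆ range (n.support.sup id + 1) := by
  intro j hj
  have := Finsupp.support_onFinset_subset hj
  rw [mem_range] at this ⊢
  omega

/-- Main sum identity for `F`. -/
lemma sumF (p : ℕ) (n : ℕ →₀ ℕ) :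
    ((p : ℤ) - 1) * ((F n).sum fun j a => a * (p : ℤ) ^ j) + (n.sum fun _ a => a : ℕ)
      = (n.sum fun i a => a * p ^ i : ℕ) := by
  set N := n.support.sup id + 1 with hNdef
  have hsub : n.support ⊆ range N := sup_subset n
  have hsubF : (F n).support ⊆ range N := F_supp_subset n
  have h2 : ((n.sum fun i a => a * p ^ i : ℕ) : ℤ) = ∑ i ∈ range N, (n i : ℤ) * (p : ℤ) ^ i := by
    rw [Finsupp.sum_of_support_subset _ hsub _ (fun i _ => by simp)]
    push_cast
    ring
  have h3 : ((n.sum fun _ a => a : ℕ) : ℤ) = ∑ i ∈ range N, (n i : ℤ) := by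
    rw [Finsupp.sum_of_support_subset _ hsub _ (fun i _ => by simp)]
    push_cast
    ring
  rw [h2, h3, Finsupp.sum_of_support_subset _ hsubF _ (fun i _ => by ring)]
  have h4 : ∑ j ∈ range N, F n j * (p : ℤ) ^ j
      = ∑ i ∈ range N, (n i : ℤ) * ∑ j ∈ range i, (p : ℤ) ^ j := by
    calc ∑ j ∈ range N, F n j * (p : ℤ) ^ j
        = ∑ j ∈ range N, ∑ i ∈ range N, (if j < i then (n i : ℤ) * (p : ℤ) ^ j else 0) := by
          refine Finset.sum_congr rfl fun j _ => ?_
          rw [F_eq_sum_range hsub, Finset.sum_mul]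
          exact Finset.sum_congr rfl fun i _ => by split_ifs <;> simp
      _ = ∑ i ∈ range N, ∑ j ∈ range N, (if j < i then (n i : ℤ) * (p : ℤ) ^ j else 0) :=
          Finset.sum_comm
      _ = ∑ i ∈ range N, (n i : ℤ) * ∑ j ∈ range i, (p : ℤ) ^ j := by
          refine Finset.sum_congr rfl fun i hi => ?_
          rw [Finset.mul_sum]
          rw [← Finset.sum_subset (Finset.range_subset_range.mpr (le_of_lt (mem_range.mp hi)))
            (fun j _ hj => by rw [if_neg (fun h => hj (mem_range.mpr h))])]
          exact Finset.sum_congr rfl fun j hj => by rw [if_pos (mem_range.mp hj)]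
  rw [h4, Finset.mul_sum]
  have h5 : ∀ i ∈ range N, ((p : ℤ) - 1) * ((n i : ℤ) * ∑ j ∈ range i, (p : ℤ) ^ j)
      = (n i : ℤ) * (p : ℤ) ^ i - (n i : ℤ) := by
    intro i _
    have := geom_sum_mul (p : ℤ) i
    nlinarith [this]
  rw [Finset.sum_congr rfl h5, Finset.sum_sub_distrib]
  ring




def Gf (d : ℕ) (m : ℕ →₀ ℤ) : ℕ → ℕ
  | 0 => ((d : ℤ) - m 0).toNat
  | (k + 1) => (m k - m (k + 1)).toNat

lemma m_sup_zero (m : ℕ →₀ ℤ) {k : ℕ} (hk : m.support.sup id < k) : m k = 0 := by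
  by_contra h
  have := Finset.le_sup (f := id) (Finsupp.mem_support_iff.mpr h)
  simp only [id] at this
  omega

noncomputable def G (d : ℕ) (m : ℕ →₀ ℤ) : ℕ →₀ ℕ :=
  Finsupp.onFinset (range (m.support.sup id + 2)) (Gf d m) (by
    intro i hi
    rw [mem_range]
    cases i with
    | zero => omega
    | succ k =>
      by_contra h
      push_neg at h
      have hk : m k = 0 := m_sup_zero m (by omega)
      have hk1 : m (k + 1) = 0 := m_sup_zero m (by omega)
      exact hi (by show (m k - m (k + 1)).toNat = 0; rw [hk, hk1]; simp))

lemma G_apply0 (d : ℕ) (m : ℕ →₀ ℤ) : G d m 0 = ((d : ℤ) - m 0).toNat := rfl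

lemma G_applyS (d : ℕ) (m : ℕ →₀ ℤ) (k : ℕ) : G d m (k + 1) = (m k - m (k + 1)).toNat := rfl

lemma G_cast0 {d : ℕ} {m : ℕ →₀ ℤ} (hd : m 0 ≤ d) : (G d m 0 : ℤ) = (d : ℤ) - m 0 := by
  rw [G_apply0, Int.toNat_of_nonneg (by omega)]

lemma G_castS {d : ℕ} {m : ℕ →₀ ℤ} (hmono : ∀ i, m (i + 1) ≤ m i) (k : ℕ) :
    (G d m (k + 1) : ℤ) = m k - m (k + 1) := by
  rw [G_applyS, Int.toNat_of_nonneg (by have := hmono k; omega)]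

lemma G_supp_subset (d : ℕ) (m : ℕ →₀ ℤ) :
    (G d m).support ⊆ range (m.support.sup id + 2) :=
  Finsupp.support_onFinset_subset

lemma sumG1 {d : ℕ} {m : ℕ →₀ ℤ} (hmono : ∀ i, m (i + 1) ≤ m i) (hd : m 0 ≤ d) :
    ((G d m).sum fun _ a => a) = d := by
  set N := m.support.sup id + 1 with hNdef
  have hsub : (G d m).support ⊆ range (N + 1) := G_supp_subset d m
  have hcast : (((G d m).sum fun _ a => a : ℕ) : ℤ) = ∑ i ∈ range (N + 1), (G d m i : ℤ) := by
    rw [Finsupp.sum_of_support_subset _ hsub _ (fun i _ => rfl)]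
    push_cast
    ring
  have hmN : m N = 0 := m_sup_zero m (by omega)
  have : (((G d m).sum fun _ a => a : ℕ) : ℤ) = (d : ℤ) := by
    rw [hcast, Finset.sum_range_succ']
    have h1 : ∀ i ∈ range N, (G d m (i + 1) : ℤ) = m i - m (i + 1) :=
      fun i _ => G_castS hmono i
    rw [Finset.sum_congr rfl h1, Finset.sum_range_sub' (fun i => m i) N, G_cast0 hd, hmN]
    ring
  exact_mod_cast this

lemma sumG2 (p : ℕ) {d : ℕ} {m : ℕ →₀ ℤ} (hmono : ∀ i, m (i + 1) ≤ m i) (hd : m 0 ≤ d) :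
    (((G d m).sum fun i a => a * p ^ i : ℕ) : ℤ)
      = (d : ℤ) + ((p : ℤ) - 1) * (m.sum fun i a => a * (p : ℤ) ^ i) := by
  set N := m.support.sup id + 1 with hNdef
  have hsub : (G d m).support ⊆ range (N + 1) := G_supp_subset d m
  have hsubm : m.support ⊆ range N := fun i hi => mem_range.mpr (by
    have := Finset.le_sup (f := id) hi; simp only [id] at this; omega)
  have hmN : m N = 0 := m_sup_zero m (by omega)
  set S := ∑ i ∈ range N, m i * (p : ℤ) ^ i with hS
  have hmsum : (m.sum fun i a => a * (p : ℤ) ^ i) = S := by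
    rw [Finsupp.sum_of_support_subset _ hsubm _ (fun i _ => by ring)]
  have hcast : (((G d m).sum fun i a => a * p ^ i : ℕ) : ℤ)
      = ∑ i ∈ range (N + 1), (G d m i : ℤ) * (p : ℤ) ^ i := by
    rw [Finsupp.sum_of_support_subset _ hsub _ (fun i _ => by simp)]
    push_cast
    ring
  rw [hcast, hmsum, Finset.sum_range_succ']
  have h1 : ∀ i ∈ range N, (G d m (i + 1) : ℤ) * (p : ℤ) ^ (i + 1)
      = (m i - m (i + 1)) * (p : ℤ) ^ (i + 1) := fun i _ => by rw [G_castS hmono i]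
  rw [Finset.sum_congr rfl h1, G_cast0 hd]
  have h2 : ∑ i ∈ range N, (m i - m (i + 1)) * (p : ℤ) ^ (i + 1)
      = (p : ℤ) * S - (S - m 0) := by
    have e1 : ∑ i ∈ range N, (m i - m (i + 1)) * (p : ℤ) ^ (i + 1)
        = ∑ i ∈ range N, (m i * (p : ℤ) ^ (i + 1)) - ∑ i ∈ range N, m (i + 1) * (p : ℤ) ^ (i + 1) := by
      rw [← Finset.sum_sub_distrib]
      exact Finset.sum_congr rfl fun i _ => by ring
    have e2 : ∑ i ∈ range N, m i * (p : ℤ) ^ (i + 1) = (p : ℤ) * S := by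
      rw [hS, Finset.mul_sum]
      exact Finset.sum_congr rfl fun i _ => by ring
    have e3 : ∑ i ∈ range N, m (i + 1) * (p : ℤ) ^ (i + 1) = S - m 0 := by
      have := Finset.sum_range_succ' (fun i => m i * (p : ℤ) ^ i) N
      rw [Finset.sum_range_succ] at this
      rw [hmN] at this
      simp only [pow_zero, mul_one] at this
      rw [← hS] at this
      linarith
    rw [e1, e2, e3]
  rw [h2]
  simp only [pow_zero, mul_one]
  ring


lemma GF {d : ℕ} {n : ℕ →₀ ℕ} (hd : (n.sum fun _ a => a) = d) : G d (F n) = n := by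
  have hsum : ∑ i ∈ n.support, (n i : ℤ) = (d : ℤ) := by
    rw [Finsupp.sum] at hd
    exact_mod_cast hd
  ext i
  cases i with
  | zero =>
    have h0 := key0 n
    rw [G_apply0]
    have : (d : ℤ) - F n 0 = (n 0 : ℤ) := by rw [← hsum, ← h0]; ring
    rw [this, Int.toNat_natCast]
  | succ k =>
    have h1 := key1 n k
    rw [G_applyS]
    have : F n k - F n (k + 1) = (n (k + 1) : ℤ) := by rw [h1]; ring
    rw [this, Int.toNat_natCast]

lemma F_zero_of_le {n : ℕ →₀ ℕ} {j : ℕ} (hj : n.support.sup id ≤ j) : F n j = 0 := by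
  rw [F_apply]
  apply Finset.sum_eq_zero
  intro i hi
  rw [Finset.mem_filter] at hi
  have := Finset.le_sup (f := id) hi.1
  simp only [id] at this
  omega

lemma key2 {d : ℕ} {m : ℕ →₀ ℤ} (hmono : ∀ i, m (i + 1) ≤ m i) (hd : m 0 ≤ d) :
    F (G d m) = m := by
  set B := (G d m).support.sup id ⊔ (m.support.sup id + 1) with hB
  have base : ∀ j, B ≤ j → F (G d m) j = m j := by
    intro j hj
    rw [F_zero_of_le (by omega), m_sup_zero m (by omega)]
  have main : ∀ t j, B ≤ j + t → F (G d m) j = m j := by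
    intro t
    induction t with
    | zero => intro j hj; exact base j (by omega)
    | succ t ih =>
      intro j hj
      rcases le_or_gt B j with h | h
      · exact base j h
      · have h2 := ih (j + 1) (by omega)
        rw [key1 (G d m) j, h2, G_castS hmono j]
        ring
  ext j
  exact main B j (by omega)

end Stmt1

/-- `q_p(D,d)`: the number of finitely supported sequences `n` of nonnegative integers with
`Σ n_i p^i = D` and `Σ n_i = d`. -/
noncomputable def qp (p D d : ℕ) : ℕ :=
  {n : ℕ →₀ ℕ | (n.sum fun i a => a * p ^ i) = D ∧ (n.sum fun _ a => a) = d}.ncard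

/-- `r_p(M,d)`: the number of finitely supported nonincreasing sequences `m` of nonnegative
integers with `m 0 ≤ d` and `Σ m_i p^i = M`. -/
noncomputable def rp (p : ℤ) (M d : ℤ) : ℕ :=
  {m : ℕ →₀ ℤ | (∀ i, 0 ≤ m i) ∧ (∀ i, m (i + 1) ≤ m i) ∧ m 0 ≤ d ∧
    (m.sum fun i a => a * p ^ i) = M}.ncard

/-- if `p − 1 ∤ D − d` then `q_p(D,d) = 0`, and if `p − 1 ∣ D − d` then
`q_p(D,d) = r_p((D−d)/(p−1), d)`. -/
theorem stmt_1 (p : ℕ) (hp : 2 ≤ p) (D d : ℕ) :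
    (¬ ((p : ℤ) - 1 ∣ (D : ℤ) - d) → qp p D d = 0) ∧
    (((p : ℤ) - 1 ∣ (D : ℤ) - d) →
      qp p D d = rp p (((D : ℤ) - d) / ((p : ℤ) - 1)) d) := by
  open Stmt1 in
  constructor
  · intro hnd
    rw [qp]
    convert Set.ncard_empty (ℕ →₀ ℕ)
    rw [Set.eq_empty_iff_forall_notMem]
    rintro n ⟨h1, h2⟩
    refine hnd ⟨(F n).sum fun j a => a * (p : ℤ) ^ j, ?_⟩
    have hs := Stmt1.sumF p n
    rw [h1, h2] at hs
    linarith
  · intro hdvd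
    have hp1 : ((p : ℤ) - 1) ≠ 0 := by
      have h2 : (2 : ℤ) ≤ (p : ℤ) := by exact_mod_cast hp
      omega
    set M : ℤ := ((D : ℤ) - d) / ((p : ℤ) - 1) with hMdef
    have hM : ((p : ℤ) - 1) * M = (D : ℤ) - d := Int.mul_ediv_cancel' hdvd
    have hFT : ∀ n : ℕ →₀ ℕ, (n.sum fun i a => a * p ^ i) = D → (n.sum fun _ a => a) = d →
        (∀ i, 0 ≤ F n i) ∧ (∀ i, F n (i + 1) ≤ F n i) ∧ F n 0 ≤ (d : ℤ) ∧
          ((F n).sum fun i a => a * (p : ℤ) ^ i) = M := by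
      intro n h1 h2
      have hs := Stmt1.sumF p n
      rw [h1, h2] at hs
      have hsupd : ∑ i ∈ n.support, (n i : ℤ) = (d : ℤ) := by
        rw [Finsupp.sum] at h2
        exact_mod_cast h2
      refine ⟨F_nonneg n, fun i => ?_, ?_, ?_⟩
      · have := key1 n i
        have h0 : (0 : ℤ) ≤ (n (i + 1) : ℤ) := Int.natCast_nonneg _
        linarith
      · have := key0 n
        have h0 : (0 : ℤ) ≤ (n 0 : ℤ) := Int.natCast_nonneg _
        rw [hsupd] at this
        linarith
      · apply mul_left_cancel₀ hp1
        rw [hM]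
        linarith
    have hGS : ∀ m : ℕ →₀ ℤ, (∀ i, 0 ≤ m i) → (∀ i, m (i + 1) ≤ m i) → m 0 ≤ (d : ℤ) →
        (m.sum fun i a => a * (p : ℤ) ^ i) = M →
        ((G d m).sum fun i a => a * p ^ i) = D ∧ ((G d m).sum fun _ a => a) = d := by
      intro m hnn hmono hd hsum
      refine ⟨?_, sumG1 hmono hd⟩
      have hs := Stmt1.sumG2 p hmono hd
      rw [hsum] at hs
      have : (((G d m).sum fun i a => a * p ^ i : ℕ) : ℤ) = (D : ℤ) := by
        rw [hs]; linarith
      exact_mod_cast this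
    rw [qp, rp, ← Nat.card_coe_set_eq, ← Nat.card_coe_set_eq]
    refine Nat.card_congr ⟨fun x => ⟨F x.1, hFT x.1 x.2.1 x.2.2⟩,
      fun y => ⟨G d y.1, hGS y.1 y.2.1 y.2.2.1 y.2.2.2.1 y.2.2.2.2⟩, fun x => ?_, fun y => ?_⟩
    · exact Subtype.ext (GF x.2.2)
    · exact Subtype.ext (key2 y.2.2.1 y.2.2.2.1)
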